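/- The family f_t(e₁) = (√t/2)e₁ + (√t/2)e₂, f_t(e₂) = t·e₁ (t > 0) contracts ψ₅ onto an algebra isomorphic to ψ₃: the limit as t → 0⁺ of f_t⁻¹(ψ₅(f_t(x), f_t(y))) exists for all x, y, and gives a product isomorphic to e₁∘e₁ = e₂, e₂∘e₂ = 0, e₁∘e₂ = 0. -/

import Mathlib

open Filter Topology

/-- ψ₅ : e₁∘e₁ = e₁, e₂∘e₂ = −e₁, e₁∘e₂ = e₂. -/
def psi5 (x y : ℝ × ℝ) : ℝ × ℝ := (x.1 * y.1 - x.2 * y.2, x.1 * y.2 + x.2 * y.1)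

/-- ψ₃ : e₁∘e₁ = e₂, e₂∘e₂ = 0, e₁∘e₂ = 0. -/
def psi3 (x y : ℝ × ℝ) : ℝ × ℝ := (0, x.1 * y.1)

/-- f_t(e₁) = (√t/2)e₁ + (√t/2)e₂, f_t(e₂) = t·e₁. -/
noncomputable def ft (t : ℝ) (x : ℝ × ℝ) : ℝ × ℝ :=
  (Real.sqrt t / 2 * x.1 + t * x.2, Real.sqrt t / 2 * x.1)

/-- The inverse of f_t (for t > 0). -/
noncomputable def ftInv (t : ℝ) (u : ℝ × ℝ) : ℝ × ℝ :=
  (2 * u.2 / Real.sqrt t, (u.1 - u.2) / t)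

theorem stmt_16 :
    ∃ φ' : ℝ × ℝ → ℝ × ℝ → ℝ × ℝ,
      (∀ x y : ℝ × ℝ,
        Tendsto (fun t : ℝ => ftInv t (psi5 (ft t x) (ft t y)))
          (𝓝[>] 0) (𝓝 (φ' x y))) ∧
      ∃ g : (ℝ × ℝ) ≃ₗ[ℝ] (ℝ × ℝ), ∀ x y, g (φ' x y) = psi3 (g x) (g y) := by
  refine ⟨fun x y => (0, -(x.1 * y.1) / 2), ?_, ?_⟩
  · intro x y
    have hF : Tendsto
        (fun t : ℝ => ((Real.sqrt t * (x.1 * y.1) + t * (x.1 * y.2 + x.2 * y.1) : ℝ),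
          (-(x.1 * y.1) / 2 + t * (x.2 * y.2) : ℝ)))
        (𝓝[>] 0) (𝓝 (0, -(x.1 * y.1) / 2)) := by
      have hc : Continuous (fun t : ℝ =>
          ((Real.sqrt t * (x.1 * y.1) + t * (x.1 * y.2 + x.2 * y.1) : ℝ),
            (-(x.1 * y.1) / 2 + t * (x.2 * y.2) : ℝ))) := by
        fun_prop
      have := hc.tendsto 0
      simp only [Real.sqrt_zero, zero_mul, add_zero, zero_add] at this
      exact this.mono_left nhdsWithin_le_nhds
    refine hF.congr' ?_
    filter_upwards [self_mem_nhdsWithin] with t ht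
    have ht0 : (0:ℝ) < t := ht
    obtain ⟨s, hs0, rfl⟩ : ∃ s : ℝ, 0 < s ∧ s * s = t :=
      ⟨Real.sqrt t, Real.sqrt_pos.mpr ht0, Real.mul_self_sqrt ht0.le⟩
    have hsq : Real.sqrt (s * s) = s := Real.sqrt_mul_self hs0.le
    simp only [ftInv, psi5, ft, Prod.mk.injEq, hsq]
    constructor <;> (field_simp; ring)
  · refine ⟨LinearEquiv.prodCongr (LinearEquiv.refl ℝ ℝ)
      (LinearEquiv.smulOfNeZero ℝ ℝ (-2) (by norm_num)), ?_⟩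
    intro x y
    simp [psi3, smul_eq_mul]
    ring
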